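/- Let V : ℝ^k → ℝ be λ-convex and let V_n be its Moreau–Yosida regularization V_n(x) = inf_v [V(v) + (n/2)|x−v|²]. Suppose x_n → x and ξ_n ∈ ∂V_n(x_n) (the subdifferential of V_n, which is single-valued since V_n ∈ C^{1,1} for n large) with ξ_n → ξ. Then ξ ∈ ∂V(x), where ∂V is the λ-subdifferential of V. -/

import Mathlib

open scoped RealInnerProductSpace
open Filter

set_option maxHeartbeats 1000000 in
theorem stmt19 (k : ℕ) (lam : ℝ) (V : EuclideanSpace ℝ (Fin k) → ℝ)
    (hconv : ConvexOn ℝ Set.univ (fun x => V x - lam / 2 * ‖x‖ ^ 2))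
    (Vn : ℕ → EuclideanSpace ℝ (Fin k) → ℝ)
    (hVn : ∀ n x, Vn n x = ⨅ v : EuclideanSpace ℝ (Fin k),
      (V v + (n : ℝ) / 2 * ‖x - v‖ ^ 2))
    (lamn : ℕ → ℝ) (hlamn : Tendsto lamn atTop (nhds lam))
    (xn : ℕ → EuclideanSpace ℝ (Fin k)) (x : EuclideanSpace ℝ (Fin k))
    (hx : Tendsto xn atTop (nhds x))
    (ξn : ℕ → EuclideanSpace ℝ (Fin k)) (ξ : EuclideanSpace ℝ (Fin k))
    (hξ : Tendsto ξn atTop (nhds ξ))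
    (hsub : ∀ n z, Vn n z - Vn n (xn n)
      ≥ ⟪ξn n, z - xn n⟫ + lamn n / 2 * ‖z - xn n‖ ^ 2) :
    ∀ z, V z - V x ≥ ⟪ξ, z - x⟫ + lam / 2 * ‖z - x‖ ^ 2 := by
  classical
  set W : EuclideanSpace ℝ (Fin k) → ℝ := fun v => V v - lam / 2 * ‖v‖ ^ 2 with hW
  -- continuity
  have hWcont : Continuous W := by
    have := hconv.continuousOn isOpen_univ
    rwa [continuousOn_univ] at this
  have hVcont : Continuous V := by
    have : V = fun v => W v + lam / 2 * ‖v‖ ^ 2 := by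
      funext v; simp [hW]
    rw [this]
    exact hWcont.add (continuous_const.mul ((continuous_norm).pow 2))
  -- Step 1: a lower bound  W v ≥ W x - M * (1 + ‖v - x‖)
  obtain ⟨m, hm⟩ : ∃ m, ∀ u ∈ Metric.closedBall x 1, m ≤ W u := by
    obtain ⟨m, hm⟩ := (isCompact_closedBall x 1).bddBelow_image hWcont.continuousOn
    exact ⟨m, fun u hu => hm ⟨u, hu, rfl⟩⟩
  set M : ℝ := max 0 (W x - m) with hM
  have hM0 : 0 ≤ M := le_max_left _ _
  have hWlow : ∀ v : EuclideanSpace ℝ (Fin k), W x - M * (1 + ‖v - x‖) ≤ W v := by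
    intro v
    set t : ℝ := ‖v - x‖ with ht
    have ht0 : 0 ≤ t := norm_nonneg _
    rcases le_or_gt t 1 with h1 | h1
    · have hv : v ∈ Metric.closedBall x 1 := by
        rw [Metric.mem_closedBall, dist_eq_norm]; exact h1
      have : W x - m ≤ M := le_max_right _ _
      have hMt : M ≤ M * (1 + t) := by nlinarith
      have := hm v hv
      linarith
    · -- t > 1 : use convexity
      have htpos : 0 < t := by linarith
      set u : EuclideanSpace ℝ (Fin k) := x + t⁻¹ • (v - x) with hu
      have hu1 : u ∈ Metric.closedBall x 1 := by
        rw [Metric.mem_closedBall, dist_eq_norm]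
        have : u - x = t⁻¹ • (v - x) := by simp [hu]
        rw [this, norm_smul, norm_inv, Real.norm_eq_abs, abs_of_pos htpos]
        rw [← ht, inv_mul_cancel₀ (ne_of_gt htpos)]
      have ha : (0:ℝ) ≤ 1 - t⁻¹ := by
        have : t⁻¹ ≤ 1 := by
          rw [inv_le_one_iff₀]; right; linarith
        linarith
      have hb : (0:ℝ) < t⁻¹ := inv_pos.mpr htpos
      have hab : (1 - t⁻¹) + t⁻¹ = 1 := by ring
      have hcomb : (1 - t⁻¹) • x + t⁻¹ • v = u := by
        rw [hu, sub_smul, one_smul, smul_sub]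
        abel
      have hconv2 := hconv.2 (Set.mem_univ x) (Set.mem_univ v) ha hb.le hab
      rw [hcomb] at hconv2
      simp only [smul_eq_mul] at hconv2
      have hWu : m ≤ W u := hm u hu1
      have hWu' : W u ≤ (1 - t⁻¹) * W x + t⁻¹ * W v := hconv2
      -- W v ≥ t * (W u - W x) + W x
      have h3 : t * (W u - W x) + W x ≤ W v := by
        have h := mul_le_mul_of_nonneg_left hWu' htpos.le
        have htt : t * t⁻¹ = 1 := mul_inv_cancel₀ (ne_of_gt htpos)
        have hexp : t * ((1 - t⁻¹) * W x + t⁻¹ * W v)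
            = (t - t * t⁻¹) * W x + t * t⁻¹ * W v := by ring
        rw [hexp, htt] at h
        nlinarith
      have h4 : W x - m ≤ M := le_max_right _ _
      nlinarith
  -- Step 2: quadratic lower bound on V
  set C0 : ℝ := W x - 2 * M - |lam| * ‖x‖ ^ 2 with hC0
  set B : ℝ := M + |lam| with hB
  have hB0 : 0 ≤ B := by positivity
  clear_value W M C0 B
  have hVlow : ∀ v : EuclideanSpace ℝ (Fin k), C0 - B * ‖v - x‖ ^ 2 ≤ V v := by
    intro v
    have h1 := hWlow v
    have h2 : V v = W v + lam / 2 * ‖v‖ ^ 2 := by simp [hW]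
    have h3 : ‖v‖ ^ 2 ≤ 2 * ‖x‖ ^ 2 + 2 * ‖v - x‖ ^ 2 := by
      have h : ‖v‖ ≤ ‖x‖ + ‖v - x‖ := by
        have := norm_add_le (v - x) x
        simpa [sub_add_cancel, add_comm] using this
      have hsq := mul_le_mul h h (norm_nonneg v)
        (add_nonneg (norm_nonneg x) (norm_nonneg (v - x)))
      nlinarith [sq_nonneg (‖x‖ - ‖v - x‖)]
    have h4 : lam / 2 * ‖v‖ ^ 2 ≥ -(|lam| * (‖x‖ ^ 2 + ‖v - x‖ ^ 2)) := by
      have habs : -|lam| ≤ lam := neg_abs_le lam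
      have h0 : (0:ℝ) ≤ ‖v‖ ^ 2 := by positivity
      rcases le_or_gt 0 lam with hl | hl
      · have : (0:ℝ) ≤ lam / 2 * ‖v‖ ^ 2 := by positivity
        have : (0:ℝ) ≤ |lam| * (‖x‖ ^ 2 + ‖v - x‖ ^ 2) := by positivity
        linarith
      · have hle : |lam| = -lam := abs_of_neg hl
        nlinarith [norm_nonneg (v - x), norm_nonneg x]
    have h5 : 1 + ‖v - x‖ ≤ 2 + ‖v - x‖ ^ 2 := by
      nlinarith [norm_nonneg (v - x)]
    have h6 : M * (1 + ‖v - x‖) ≤ M * (2 + ‖v - x‖ ^ 2) :=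
      mul_le_mul_of_nonneg_left h5 hM0
    rw [hC0, hB]
    nlinarith [norm_nonneg (v - x)]
  -- helper: global lower bound for the Moreau functional with any center
  have hGlobal : ∀ (y : EuclideanSpace ℝ (Fin k)) (n : ℕ), 4 * B ≤ (n : ℝ) →
      ∀ v : EuclideanSpace ℝ (Fin k), C0 - 2 * B * ‖y - x‖ ^ 2 ≤ V v + (n : ℝ) / 2 * ‖y - v‖ ^ 2 := by
    intro y n hn v
    have h1 := hVlow v
    have h2 : ‖v - x‖ ^ 2 ≤ 2 * ‖y - v‖ ^ 2 + 2 * ‖y - x‖ ^ 2 := by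
      have : ‖v - x‖ ≤ ‖y - v‖ + ‖y - x‖ := by
        have := norm_sub_le (v - y) (x - y)
        have e : v - y - (x - y) = v - x := by abel
        rw [e] at this
        calc ‖v - x‖ ≤ ‖v - y‖ + ‖x - y‖ := this
          _ = ‖y - v‖ + ‖y - x‖ := by rw [norm_sub_rev, norm_sub_rev x y]
      have hsq := mul_le_mul this this (norm_nonneg (v - x))
        (add_nonneg (norm_nonneg (y - v)) (norm_nonneg (y - x)))
      nlinarith [sq_nonneg (‖y - v‖ - ‖y - x‖)]
    nlinarith [mul_le_mul_of_nonneg_left h2 hB0,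
      mul_le_mul_of_nonneg_right hn (sq_nonneg ‖y - v‖)]
  -- Vn n z ≤ V z eventually (for 4B ≤ n)
  have hVnle : ∀ (z : EuclideanSpace ℝ (Fin k)) (n : ℕ), 4 * B ≤ (n : ℝ) → Vn n z ≤ V z := by
    intro z n hn
    rw [hVn]
    have hbdd : BddBelow (Set.range fun v : EuclideanSpace ℝ (Fin k) => V v + (n : ℝ) / 2 * ‖z - v‖ ^ 2) := by
      refine ⟨C0 - 2 * B * ‖z - x‖ ^ 2, ?_⟩
      rintro _ ⟨v, rfl⟩
      exact hGlobal z n hn v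
    have hle := ciInf_le hbdd z
    have h0 : V z + (n : ℝ) / 2 * ‖z - z‖ ^ 2 = V z := by
      rw [sub_self, norm_zero]; ring
    rw [h0] at hle
    exact hle
  -- key lower bound: for every ε > 0, eventually Vn n (xn n) ≥ V x - ε
  have hkey : ∀ ε : ℝ, 0 < ε → ∀ᶠ n in atTop, V x - ε ≤ Vn n (xn n) := by
    intro ε εpos
    obtain ⟨δ, δpos, hδ⟩ := Metric.continuousAt_iff.mp hVcont.continuousAt ε εpos
    set r : ℝ := min (δ / 2) 1 with hr
    have hrpos : 0 < r := lt_min (by linarith) one_pos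
    have hrcont : ∀ v : EuclideanSpace ℝ (Fin k), ‖v - x‖ ≤ r → V x - ε ≤ V v := by
      intro v hv
      have : dist v x < δ := by
        rw [dist_eq_norm]
        calc ‖v - x‖ ≤ r := hv
          _ ≤ δ / 2 := min_le_left _ _
          _ < δ := by linarith
      have := hδ this
      rw [Real.dist_eq] at this
      have := abs_lt.mp this
      linarith [this.1]
    clear_value r
    -- choose N
    have hNlarge : ∀ᶠ n : ℕ in atTop, 8 * B + 8 * (|V x| + |C0| + 1) / r ^ 2 ≤ (n : ℝ) := by
      obtain ⟨N, hN⟩ := exists_nat_ge (8 * B + 8 * (|V x| + |C0| + 1) / r ^ 2)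
      filter_upwards [eventually_ge_atTop N] with n hn
      exact hN.trans (by exact_mod_cast hn)
    have hxnear : ∀ᶠ n in atTop, ‖xn n - x‖ ≤ r / 2 := by
      have := Metric.tendsto_atTop.mp hx (r / 2) (by linarith)
      obtain ⟨N, hN⟩ := this
      filter_upwards [eventually_ge_atTop N] with n hn
      have := hN n hn
      rw [dist_eq_norm] at this
      linarith
    filter_upwards [hNlarge, hxnear] with n hn hxn
    have hBn : 8 * B ≤ (n : ℝ) := by
      have : 0 ≤ 8 * (|V x| + |C0| + 1) / r ^ 2 := by positivity
      linarith
    have hn2 : 8 * (|V x| + |C0| + 1) / r ^ 2 ≤ (n : ℝ) - 8 * B := by linarith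
    have hq : |V x| + |C0| + 1 ≤ r ^ 2 * ((n : ℝ) / 8 - B) := by
      rw [div_le_iff₀ (by positivity)] at hn2
      nlinarith [sq_nonneg r]
    rw [hVn]
    refine le_ciInf fun v => ?_
    rcases le_or_gt ‖v - x‖ r with hc | hc
    · have h1 := hrcont v hc
      have h2 : (0:ℝ) ≤ (n : ℝ) / 2 * ‖xn n - v‖ ^ 2 := by positivity
      linarith
    · -- far case
      set t : ℝ := ‖v - x‖ with ht
      clear_value t
      have htr : r < t := hc
      have h1 : t - r / 2 ≤ ‖xn n - v‖ := by
        have e : x - v - (x - xn n) = xn n - v := by abel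
        have e2 : ‖x - v‖ = t := by rw [norm_sub_rev]; exact ht.symm
        have e3 : ‖x - xn n‖ = ‖xn n - x‖ := by rw [norm_sub_rev]
        have h' := norm_sub_norm_le (x - v) (x - xn n)
        rw [e, e2, e3] at h'
        linarith
      have h2 : t / 2 ≤ ‖xn n - v‖ := by
        have : r / 2 ≤ t / 2 := by linarith
        linarith
      have h3 : t ^ 2 / 4 ≤ ‖xn n - v‖ ^ 2 := by
        nlinarith [norm_nonneg (xn n - v), hrpos.le]
      have h4 := hVlow v
      rw [← ht] at h4
      have h5 : C0 + t ^ 2 * ((n : ℝ) / 8 - B) ≤ V v + (n : ℝ) / 2 * ‖xn n - v‖ ^ 2 := by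
        have hmul := mul_le_mul_of_nonneg_left h3 (by positivity : (0:ℝ) ≤ (n : ℝ) / 2)
        nlinarith
      have h6 : r ^ 2 * ((n : ℝ) / 8 - B) ≤ t ^ 2 * ((n : ℝ) / 8 - B) := by
        have hnb : 0 ≤ (n : ℝ) / 8 - B := by linarith
        have hrt : r ^ 2 ≤ t ^ 2 := by nlinarith
        exact mul_le_mul_of_nonneg_right hrt hnb
      have h7 : V x - ε ≤ C0 + (|V x| + |C0| + 1) := by
        have := le_abs_self (V x)
        have := neg_abs_le C0
        linarith
      linarith
  -- Final limit passage
  intro z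
  set g : ℕ → ℝ := fun n => ⟪ξn n, z - xn n⟫ + lamn n / 2 * ‖z - xn n‖ ^ 2 with hg
  have htend : Tendsto g atTop (nhds (⟪ξ, z - x⟫ + lam / 2 * ‖z - x‖ ^ 2)) := by
    have h1 : Tendsto (fun n => z - xn n) atTop (nhds (z - x)) :=
      tendsto_const_nhds.sub hx
    have h2 : Tendsto (fun n => (⟪ξn n, z - xn n⟫ : ℝ)) atTop (nhds ⟪ξ, z - x⟫) :=
      hξ.inner h1
    have h3 : Tendsto (fun n => lamn n / 2 * ‖z - xn n‖ ^ 2) atTop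
        (nhds (lam / 2 * ‖z - x‖ ^ 2)) := by
      exact (hlamn.div_const 2).mul ((h1.norm).pow 2)
    exact h2.add h3
  have hfinal : ⟪ξ, z - x⟫ + lam / 2 * ‖z - x‖ ^ 2 ≤ V z - V x := by
    have hε : ∀ ε : ℝ, 0 < ε → ⟪ξ, z - x⟫ + lam / 2 * ‖z - x‖ ^ 2 ≤ V z - V x + ε := by
      intro ε εpos
      refine le_of_tendsto htend ?_
      have hBev : ∀ᶠ n : ℕ in atTop, 4 * B ≤ (n : ℝ) := by
        obtain ⟨N, hN⟩ := exists_nat_ge (4 * B)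
        filter_upwards [eventually_ge_atTop N] with n hn
        exact hN.trans (by exact_mod_cast hn)
      filter_upwards [hkey ε εpos, hBev] with n h1 h2
      have h3 := hsub n z
      have h4 := hVnle z n h2
      have : g n ≤ Vn n z - Vn n (xn n) := h3
      linarith
    by_contra hcon
    push_neg at hcon
    have := hε ((⟪ξ, z - x⟫ + lam / 2 * ‖z - x‖ ^ 2 - (V z - V x)) / 2)
      (by linarith)
    linarith
  exact hfinal
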